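/- (k-convexification commutes with the constrained search.) For every positive integer k and every ρ ∈ conv_k(ι*(P)), the pure functional F̄_p of the k-convexified theory satisfies F̄_p(ρ) = inf { Σ_{i=1}^k t_i F_p(ρ_i) : ρ_i ∈ ι*(P), t_i ≥ 0, Σ t_i = 1, Σ t_i ρ_i = ρ }; that is, the k-convexification of F_p equals the pure functional of the k-convexified theory. -/

import Mathlib

open Filter Topology

noncomputable section

variable {V H : Type*}
  [AddCommGroup V] [Module ℝ V]
  [NormedAddCommGroup H] [InnerProductSpace ℂ H]

/-- The real expectation value `⟨ψ, T ψ⟩` of an operator `T` in the vector `ψ`. -/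
def expectation (T : H →ₗ[ℂ] H) (ψ : H) : ℝ := (inner ℂ ψ (T ψ) : ℂ).re

/-- The ground state energy of the Hamiltonian `ι v + W`. -/
def energy (ι : V →ₗ[ℝ] (H →ₗ[ℂ] H)) (W : H →ₗ[ℂ] H) (v : V) : ℝ :=
  sInf {r : ℝ | ∃ ψ : H, ‖ψ‖ = 1 ∧ r = expectation (ι v + W) ψ}

/-- The density `ι*(|ψ⟩⟨ψ|)` of the pure state given by the unit vector `ψ`,
as an element of the dual space `V*`. -/
def pureDensity (ι : V →ₗ[ℝ] (H →ₗ[ℂ] H)) (ψ : H) : Module.Dual ℝ V where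
  toFun v := expectation (ι v) ψ
  map_add' v w := by simp [expectation, inner_add_right]
  map_smul' c v := by
    simp only [map_smul, LinearMap.smul_apply, expectation, RingHom.id_apply, smul_eq_mul]
    rw [← algebraMap_smul ℂ c ((ι v) ψ), Complex.coe_algebraMap, inner_smul_right]
    simp

/-- An ensemble state: a positive semidefinite operator of unit trace. -/
def IsEnsembleState (Γ : H →ₗ[ℂ] H) : Prop :=
  Γ.IsSymmetric ∧ (∀ x : H, 0 ≤ (inner ℂ x (Γ x) : ℂ).re) ∧ LinearMap.trace ℂ H Γ = 1

/-- The density `ι*(Γ)` of a state `Γ`, `v ↦ Tr(Γ ι(v))`, as an element of `V*`. -/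
def traceDensity (ι : V →ₗ[ℝ] (H →ₗ[ℂ] H)) (Γ : H →ₗ[ℂ] H) : Module.Dual ℝ V where
  toFun v := (LinearMap.trace ℂ H (ι v ∘ₗ Γ)).re
  map_add' v w := by simp [map_add, LinearMap.add_comp]
  map_smul' c v := by
    simp only [map_smul, RingHom.id_apply, smul_eq_mul]
    rw [← algebraMap_smul ℂ c (ι v), LinearMap.smul_comp, map_smul, Complex.coe_algebraMap]
    simp

/-- The pure (Levy–Lieb) universal functional `F_p`. -/
def Fp (ι : V →ₗ[ℝ] (H →ₗ[ℂ] H)) (W : H →ₗ[ℂ] H) (ρ : Module.Dual ℝ V) : ℝ :=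
  sInf {r : ℝ | ∃ ψ : H, ‖ψ‖ = 1 ∧ pureDensity ι ψ = ρ ∧ r = expectation W ψ}

/-- The ensemble (Lieb/Valone) universal functional `F_e`. -/
def Fe (ι : V →ₗ[ℝ] (H →ₗ[ℂ] H)) (W : H →ₗ[ℂ] H) (ρ : Module.Dual ℝ V) : ℝ :=
  sInf {r : ℝ | ∃ Γ : H →ₗ[ℂ] H, IsEnsembleState Γ ∧ traceDensity ι Γ = ρ ∧
    r = (LinearMap.trace ℂ H (W ∘ₗ Γ)).re}

/-- The weight space of a functional `α ∈ V*`. -/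
def weightSpace (ι : V →ₗ[ℝ] (H →ₗ[ℂ] H)) (α : Module.Dual ℝ V) : Submodule ℂ H where
  carrier := {ψ : H | ∀ v : V, ι v ψ = (α v : ℂ) • ψ}
  add_mem' := by
    intro a b ha hb v
    rw [map_add, ha v, hb v, smul_add]
  zero_mem' := by intro v; simp
  smul_mem' := by
    intro c x hx v
    rw [LinearMap.map_smul, hx v, smul_comm]

/-- The set of weights of an abelian functional theory. -/
def weights (ι : V →ₗ[ℝ] (H →ₗ[ℂ] H)) : Set (Module.Dual ℝ V) :=
  {α : Module.Dual ℝ V | weightSpace ι α ≠ ⊥}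

/-- The derivative of the density map along the set of pure states at `|Ψ⟩⟨Ψ|`,
applied to the tangent vector `φ ⊥ Ψ`: the functional `v ↦ 2 Re⟨φ, ι(v)Ψ⟩`. -/
def derivDensity (ι : V →ₗ[ℝ] (H →ₗ[ℂ] H)) (Ψ φ : H) : Module.Dual ℝ V where
  toFun v := 2 * (inner ℂ φ (ι v Ψ) : ℂ).re
  map_add' v w := by simp [inner_add_right]; ring
  map_smul' c v := by
    simp only [map_smul, LinearMap.smul_apply, RingHom.id_apply, smul_eq_mul]
    rw [← algebraMap_smul ℂ c ((ι v) Ψ), Complex.coe_algebraMap, inner_smul_right]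
    simp; ring

/-- `ρ` is a relative interior point of the convex set `C` (i.e. an interior point
of `C` within its affine span): every point of `C` lies on a segment inside `C`
having `ρ` in its (open) interior. -/
def IsRelInterior {M : Type*} [AddCommGroup M] [Module ℝ M] (C : Set M) (ρ : M) : Prop :=
  ρ ∈ C ∧ ∀ σ ∈ C, ∃ τ ∈ C, ∃ t : ℝ, 0 < t ∧ t < 1 ∧ ρ = t • σ + (1 - t) • τ

/-- Strong orthogonality: componentwise orthogonality in every weight space. -/
def StronglyOrthogonal [FiniteDimensional ℂ H] (ι : V →ₗ[ℝ] (H →ₗ[ℂ] H)) (Φ Φ' : H) : Prop :=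
  ∀ α : Module.Dual ℝ V, weightSpace ι α ≠ ⊥ →
    (inner ℂ ((weightSpace ι α).orthogonalProjectionOnto Φ)
        ((weightSpace ι α).orthogonalProjectionOnto Φ') : ℂ) = 0

/-- The `k`-convex hull of a set. -/
def convk {M : Type*} [AddCommGroup M] [Module ℝ M] (k : ℕ) (X : Set M) : Set M :=
  {ρ : M | ∃ (t : Fin k → ℝ) (x : Fin k → M),
    (∀ i, 0 ≤ t i) ∧ (∑ i, t i) = 1 ∧ (∀ i, x i ∈ X) ∧ (∑ i, t i • x i) = ρ}

/-- The operator `A ⊗ id` on `H ⊗ ℂᵏ ≅ H ⊕ ⋯ ⊕ H` (k summands). -/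
def opBar (k : ℕ) (A : H →ₗ[ℂ] H) :
    (PiLp 2 fun _ : Fin k => H) →ₗ[ℂ] (PiLp 2 fun _ : Fin k => H) where
  toFun x := WithLp.toLp 2 (fun i => A (x i))
  map_add' x y := by ext i; simp
  map_smul' c x := by ext i; simp

/-- The potential map `v ↦ ι(v) ⊗ id` of the `k`-convexified functional theory. -/
def potBar (k : ℕ) (ι : V →ₗ[ℝ] (H →ₗ[ℂ] H)) :
    V →ₗ[ℝ] ((PiLp 2 fun _ : Fin k => H) →ₗ[ℂ] (PiLp 2 fun _ : Fin k => H)) where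
  toFun v := opBar k (ι v)
  map_add' v w := by
    apply LinearMap.ext; intro x; ext i
    simp [opBar, map_add]
  map_smul' c v := by
    apply LinearMap.ext; intro x; ext i
    simp [opBar, map_smul]

/-- The subspace of potentials mapped to real multiples of the identity operator. -/
def scalarPart (ι : V →ₗ[ℝ] (H →ₗ[ℂ] H)) : Submodule ℝ V where
  carrier := {v : V | ∃ c : ℝ, ι v = c • (LinearMap.id : H →ₗ[ℂ] H)}
  add_mem' := by
    rintro a b ⟨c, hc⟩ ⟨d, hd⟩
    exact ⟨c + d, by rw [map_add, hc, hd, add_smul]⟩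
  zero_mem' := ⟨0, by simp⟩
  smul_mem' := by
    rintro a v ⟨c, hc⟩
    exact ⟨a * c, by rw [map_smul, hc, smul_smul]⟩

-- ===== auxiliary lemmas =====
lemma expectation_smul (T : H →ₗ[ℂ] H) (c : ℂ) (ψ : H) :
    expectation T (c • ψ) = ‖c‖^2 * expectation T ψ := by
  simp only [expectation, map_smul, inner_smul_left, inner_smul_right, ← mul_assoc]
  rw [Complex.mul_conj]
  rw [Complex.normSq_eq_norm_sq]
  simp [← Complex.ofReal_pow]

lemma expectation_zero (T : H →ₗ[ℂ] H) : expectation T (0 : H) = 0 := by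
  simp [expectation]

lemma pureDensity_smul (ι : V →ₗ[ℝ] (H →ₗ[ℂ] H)) (c : ℂ) (ψ : H) :
    pureDensity ι (c • ψ) = (‖c‖^2) • pureDensity ι ψ := by
  ext v
  simp only [pureDensity, LinearMap.coe_mk, AddHom.coe_mk, LinearMap.smul_apply, smul_eq_mul]
  exact expectation_smul _ _ _

lemma pureDensity_zero (ι : V →ₗ[ℝ] (H →ₗ[ℂ] H)) : pureDensity ι (0 : H) = 0 := by
  ext v; simp [pureDensity, expectation_zero]

lemma expectation_opBar (k : ℕ) (T : H →ₗ[ℂ] H) (Ψ : PiLp 2 fun _ : Fin k => H) :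
    expectation (opBar k T) Ψ = ∑ i, expectation T (Ψ i) := by
  simp only [expectation]
  rw [show (opBar k T) Ψ = WithLp.toLp 2 (fun i => T (Ψ i)) from rfl]
  rw [PiLp.inner_apply, Complex.re_sum]

lemma pureDensity_potBar (k : ℕ) (ι : V →ₗ[ℝ] (H →ₗ[ℂ] H)) (Ψ : PiLp 2 fun _ : Fin k => H) :
    pureDensity (potBar k ι) Ψ = ∑ i, pureDensity ι (Ψ i) := by
  ext v
  rw [LinearMap.sum_apply]
  exact expectation_opBar k (ι v) Ψ

set_option synthInstance.maxHeartbeats 1000000 in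
lemma neg_norm_le_expectation [FiniteDimensional ℂ H] (T : H →ₗ[ℂ] H) (ψ : H) (hψ : ‖ψ‖ = 1) :
    -‖LinearMap.toContinuousLinearMap T‖ ≤ expectation T ψ := by
  have h1 : |expectation T ψ| ≤ ‖(inner ℂ ψ (T ψ) : ℂ)‖ := by
    exact Complex.abs_re_le_norm _
  have h2 : ‖(inner ℂ ψ (T ψ) : ℂ)‖ ≤ ‖ψ‖ * ‖T ψ‖ := norm_inner_le_norm _ _
  have h3 : ‖T ψ‖ ≤ ‖LinearMap.toContinuousLinearMap T‖ * ‖ψ‖ := by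
    have := (LinearMap.toContinuousLinearMap T).le_opNorm ψ
    simpa using this
  rw [hψ] at h2 h3
  have := abs_le.mp (h1.trans (by simpa using h2.trans (by simpa using h3)))
  linarith [this.1]

lemma combo (k : ℕ) (ι : V →ₗ[ℝ] (H →ₗ[ℂ] H)) (W : H →ₗ[ℂ] H)
    (t : Fin k → ℝ) (ψ : Fin k → H) (ht : ∀ i, 0 ≤ t i) (hψ : ∀ i, ‖ψ i‖ = 1)
    (hsum : ∑ i, t i = 1) :
    ∃ Ψ : PiLp 2 fun _ : Fin k => H, ‖Ψ‖ = 1 ∧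
      pureDensity (potBar k ι) Ψ = ∑ i, t i • pureDensity ι (ψ i) ∧
      expectation (opBar k W) Ψ = ∑ i, t i * expectation W (ψ i) := by
  set Ψ : PiLp 2 fun _ : Fin k => H := WithLp.toLp 2 fun i => ((Real.sqrt (t i) : ℝ) : ℂ) • ψ i with hΨdef
  have happ : ∀ i, Ψ i = ((Real.sqrt (t i) : ℝ) : ℂ) • ψ i := fun i => rfl
  have hc : ∀ i, ‖((Real.sqrt (t i) : ℝ) : ℂ)‖^2 = t i := by
    intro i
    rw [Complex.norm_real, Real.norm_eq_abs, abs_of_nonneg (Real.sqrt_nonneg _),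
      Real.sq_sqrt (ht i)]
  refine ⟨Ψ, ?_, ?_, ?_⟩
  · have hsq : ‖Ψ‖^2 = 1 := by
      rw [PiLp.norm_sq_eq_of_L2]
      rw [show ∑ i, ‖Ψ i‖^2 = ∑ i, t i from Finset.sum_congr rfl fun i _ => by
        rw [happ i, norm_smul, hψ i, mul_one, hc i]]
      exact hsum
    calc ‖Ψ‖ = Real.sqrt (‖Ψ‖^2) := (Real.sqrt_sq (norm_nonneg Ψ)).symm
    _ = 1 := by rw [hsq, Real.sqrt_one]
  · rw [pureDensity_potBar]
    exact Finset.sum_congr rfl fun i _ => by rw [happ i, pureDensity_smul, hc i]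
  · rw [expectation_opBar]
    exact Finset.sum_congr rfl fun i _ => by rw [happ i, expectation_smul, hc i]


set_option maxHeartbeats 1000000 in
set_option synthInstance.maxHeartbeats 1000000 in
/-- `k`-convexification commutes with the constrained search. -/
theorem convexification_constrained_search [FiniteDimensional ℝ V] [FiniteDimensional ℂ H]
    [Nontrivial H]
    (ι : V →ₗ[ℝ] (H →ₗ[ℂ] H)) (W : H →ₗ[ℂ] H)
    (hι : ∀ v : V, (ι v).IsSymmetric) (hW : W.IsSymmetric)
    (k : ℕ) (hk : 0 < k)
    (ρ : Module.Dual ℝ V)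
    (hρ : ρ ∈ convk k {σ : Module.Dual ℝ V | ∃ ψ : H, ‖ψ‖ = 1 ∧ pureDensity ι ψ = σ}) :
    Fp (potBar k ι) (opBar k W) ρ
      = sInf {s : ℝ | ∃ (t : Fin k → ℝ) (x : Fin k → Module.Dual ℝ V),
          (∀ i, 0 ≤ t i) ∧ (∑ i, t i) = 1 ∧
          (∀ i, ∃ ψ : H, ‖ψ‖ = 1 ∧ pureDensity ι ψ = x i) ∧
          (∑ i, t i • x i) = ρ ∧ s = ∑ i, t i * Fp ι W (x i)} := by
  classical
  set m := ‖LinearMap.toContinuousLinearMap W‖ with hm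
  set M := ‖LinearMap.toContinuousLinearMap (opBar k W)‖ with hM
  set A : Set ℝ := {r : ℝ | ∃ Ψ : PiLp 2 fun _ : Fin k => H, ‖Ψ‖ = 1 ∧
      pureDensity (potBar k ι) Ψ = ρ ∧ r = expectation (opBar k W) Ψ} with hA
  set B : Set ℝ := {s : ℝ | ∃ (t : Fin k → ℝ) (x : Fin k → Module.Dual ℝ V),
          (∀ i, 0 ≤ t i) ∧ (∑ i, t i) = 1 ∧
          (∀ i, ∃ ψ : H, ‖ψ‖ = 1 ∧ pureDensity ι ψ = x i) ∧
          (∑ i, t i • x i) = ρ ∧ s = ∑ i, t i * Fp ι W (x i)} with hB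
  obtain ⟨t0, x0, ht0, hsum0, hx0, hρ0⟩ := hρ
  have hAbdd : BddBelow A := by
    refine ⟨-M, ?_⟩
    rintro r ⟨Ψ, hΨ, -, rfl⟩
    exact neg_norm_le_expectation _ _ hΨ
  -- lower bound for Fp on representable densities
  have hFpset_bdd : ∀ σ : Module.Dual ℝ V, BddBelow
      {r : ℝ | ∃ ψ : H, ‖ψ‖ = 1 ∧ pureDensity ι ψ = σ ∧ r = expectation W ψ} := by
    intro σ
    refine ⟨-m, ?_⟩
    rintro r ⟨ψ, h1, -, rfl⟩
    exact neg_norm_le_expectation _ _ h1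
  have hFp_lb : ∀ σ : Module.Dual ℝ V, (∃ ψ : H, ‖ψ‖ = 1 ∧ pureDensity ι ψ = σ) →
      -m ≤ Fp ι W σ := by
    rintro σ ⟨ψ, h1, h2⟩
    refine le_csInf ⟨expectation W ψ, ψ, h1, h2, rfl⟩ ?_
    rintro r ⟨φ, hφ1, -, rfl⟩
    exact neg_norm_le_expectation _ _ hφ1
  have hBne : B.Nonempty := ⟨∑ i, t0 i * Fp ι W (x0 i), t0, x0, ht0, hsum0, hx0, hρ0, rfl⟩
  have hBbdd : BddBelow B := by
    refine ⟨-m, ?_⟩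
    rintro s ⟨t, x, ht, hts, hx, -, rfl⟩
    calc -m = ∑ i, t i * (-m) := by rw [← Finset.sum_mul, hts, one_mul]
    _ ≤ ∑ i, t i * Fp ι W (x i) :=
        Finset.sum_le_sum fun i _ => mul_le_mul_of_nonneg_left (hFp_lb _ (hx i)) (ht i)
  have hAne : A.Nonempty := by
    choose ψ0 hψ01 hψ02 using hx0
    obtain ⟨Ψ, h1, h2, h3⟩ := combo k ι W t0 ψ0 ht0 hψ01 hsum0
    refine ⟨expectation (opBar k W) Ψ, Ψ, h1, ?_, rfl⟩
    rw [h2, ← hρ0]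
    exact Finset.sum_congr rfl fun i _ => by rw [hψ02 i]
  show sInf A = sInf B
  refine le_antisymm (le_csInf hBne ?_) (le_csInf hAne ?_)
  · -- sInf A ≤ each element of B
    rintro s ⟨t, x, ht, hts, hx, hxρ, rfl⟩
    refine le_of_forall_pos_le_add ?_
    intro ε hε
    have key : ∀ i, ∃ ψ : H, ‖ψ‖ = 1 ∧ pureDensity ι ψ = x i ∧
        expectation W ψ < Fp ι W (x i) + ε := by
      intro i
      obtain ⟨ψ, h1, h2⟩ := hx i
      obtain ⟨a, ⟨φ, hφ1, hφ2, rfl⟩, ha⟩ :=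
        Real.lt_sInf_add_pos (⟨expectation W ψ, ψ, h1, h2, rfl⟩ :
          Set.Nonempty {r : ℝ | ∃ ψ : H, ‖ψ‖ = 1 ∧ pureDensity ι ψ = x i ∧
            r = expectation W ψ}) hε
      exact ⟨φ, hφ1, hφ2, ha⟩
    choose ψ hψ1 hψ2 hψ3 using key
    obtain ⟨Ψ, h1, h2, h3⟩ := combo k ι W t ψ ht hψ1 hts
    have hmem : expectation (opBar k W) Ψ ∈ A := by
      refine ⟨Ψ, h1, ?_, rfl⟩
      rw [h2, ← hxρ]
      exact Finset.sum_congr rfl fun i _ => by rw [hψ2 i]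
    calc sInf A ≤ expectation (opBar k W) Ψ := csInf_le hAbdd hmem
    _ = ∑ i, t i * expectation W (ψ i) := h3
    _ ≤ ∑ i, t i * (Fp ι W (x i) + ε) :=
        Finset.sum_le_sum fun i _ => mul_le_mul_of_nonneg_left (le_of_lt (hψ3 i)) (ht i)
    _ = (∑ i, t i * Fp ι W (x i)) + ε := by
        simp only [mul_add, Finset.sum_add_distrib, ← Finset.sum_mul, hts, one_mul]
  · -- sInf B ≤ each element of A
    rintro r ⟨Ψ, hΨ, hΨρ, rfl⟩
    obtain ⟨z, hz⟩ := exists_ne (0 : H)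
    set ψ₀ : H := ((‖z‖⁻¹ : ℝ) : ℂ) • z with hψ₀def
    have hψ₀ : ‖ψ₀‖ = 1 := by
      rw [hψ₀def, norm_smul, Complex.norm_real, Real.norm_eq_abs,
        abs_of_nonneg (inv_nonneg.mpr (norm_nonneg z)), inv_mul_cancel₀ (norm_ne_zero_iff.mpr hz)]
    set t : Fin k → ℝ := fun i => ‖Ψ i‖^2 with htdef
    set ψ' : Fin k → H := fun i => if Ψ i = 0 then ψ₀ else ((‖Ψ i‖⁻¹ : ℝ) : ℂ) • Ψ i with hψ'def
    have hψ'norm : ∀ i, ‖ψ' i‖ = 1 := by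
      intro i
      rw [hψ'def]
      by_cases h : Ψ i = 0
      · simp [h, hψ₀]
      · simp only [h, if_false]
        rw [norm_smul, Complex.norm_real, Real.norm_eq_abs,
          abs_of_nonneg (inv_nonneg.mpr (norm_nonneg _)),
          inv_mul_cancel₀ (norm_ne_zero_iff.mpr h)]
    set x : Fin k → Module.Dual ℝ V := fun i => pureDensity ι (ψ' i) with hxdef
    have ht : ∀ i, 0 ≤ t i := fun i => sq_nonneg _
    have hts : ∑ i, t i = 1 := by
      have := PiLp.norm_sq_eq_of_L2 (fun _ : Fin k => H) Ψ
      rw [hΨ] at this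
      simpa using this.symm
    have htx : ∀ i, t i • x i = pureDensity ι (Ψ i) := by
      intro i
      by_cases h : Ψ i = 0
      · rw [h, pureDensity_zero, htdef, hxdef]
        simp [h]
      · rw [hxdef]
        simp only [hψ'def, h, if_false]
        rw [pureDensity_smul, smul_smul]
        rw [show t i * ‖((‖Ψ i‖⁻¹ : ℝ) : ℂ)‖^2 = 1 by
          rw [htdef, Complex.norm_real, Real.norm_eq_abs,
            abs_of_nonneg (inv_nonneg.mpr (norm_nonneg _))]
          field_simp]
        rw [one_smul]
    have hexp : ∀ i, t i * expectation W (ψ' i) = expectation W (Ψ i) := by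
      intro i
      by_cases h : Ψ i = 0
      · rw [h, expectation_zero, htdef]
        simp [h]
      · simp only [hψ'def, h, if_false]
        rw [expectation_smul, ← mul_assoc]
        rw [show t i * ‖((‖Ψ i‖⁻¹ : ℝ) : ℂ)‖^2 = 1 by
          rw [htdef, Complex.norm_real, Real.norm_eq_abs,
            abs_of_nonneg (inv_nonneg.mpr (norm_nonneg _))]
          field_simp]
        rw [one_mul]
    have hxρ : ∑ i, t i • x i = ρ := by
      rw [show ∑ i, t i • x i = ∑ i, pureDensity ι (Ψ i) from
        Finset.sum_congr rfl fun i _ => htx i]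
      rw [← pureDensity_potBar, hΨρ]
    have hsB : (∑ i, t i * Fp ι W (x i)) ∈ B :=
      ⟨t, x, ht, hts, fun i => ⟨ψ' i, hψ'norm i, rfl⟩, hxρ, rfl⟩
    calc sInf B ≤ ∑ i, t i * Fp ι W (x i) := csInf_le hBbdd hsB
    _ ≤ ∑ i, t i * expectation W (ψ' i) :=
        Finset.sum_le_sum fun i _ => mul_le_mul_of_nonneg_left
          (csInf_le (hFpset_bdd (x i)) ⟨ψ' i, hψ'norm i, rfl, rfl⟩) (ht i)
    _ = ∑ i, expectation W (Ψ i) := Finset.sum_congr rfl fun i _ => hexp i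
    _ = expectation (opBar k W) Ψ := (expectation_opBar k W Ψ).symm

end
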